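/- Let H_X ∈ F_2^{r_X×n}, H_Z ∈ F_2^{s_Z×n} with H_Z H_X^T = 0, let H_X' ∈ F_2^{r_X'×n'}, ∂_1 ∈ F_2^{n_A×r_A}, f_1 ∈ F_2^{n×r_A}, f_1' ∈ F_2^{n'×r_A}. Assume: (a) every row and every column of f_1 has at most one nonzero entry; (b) for all w_A ∈ F_2^{r_A} and w_C ∈ F_2^{r_X'}, one has |∂_1 w_A| + |f_1' w_A + (H_X')^T w_C| ≥ |w_A| (i.e., the relative Cheeger constant of H_g = [[∂_1, 0],[f_1', (H_X')^T]] with respect to its first block of columns is at least 1). Then for every L_B ∈ F_2^n with H_Z L_B = 0 and L_B ∉ im(H_X^T), and for all w_B ∈ F_2^{r_X}, w_A ∈ F_2^{r_A}, w_C ∈ F_2^{r_X'}: |L_B + H_X^T w_B + f_1 w_A| + |∂_1 w_A| + |f_1' w_A + (H_X')^T w_C| ≥ d_X, where d_X := min{|u| : H_Z u = 0, u ∉ im(H_X^T)}. Hence every X-logical operator of the merged (cone) code represented on the first code block retains weight at least the X-distance d_X of the first CSS code. -/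

import Mathlib

open Matrix Finset

lemma norm_le_add_norm {k : ℕ} (x y : Fin k → ZMod 2) :
    hammingNorm x ≤ hammingNorm (x + y) + hammingNorm y := by
  have h1 : hammingNorm x = hammingDist (x + y) y := by
    rw [hammingDist_eq_hammingNorm]; congr 1; funext i; simp only [Pi.sub_apply, Pi.add_apply, Pi.neg_apply]
    have h2 : (2 : ZMod 2) = 0 := rfl
    linear_combination (x i) * h2
  rw [h1]
  calc hammingDist (x + y) y ≤ hammingDist (x+y) 0 + hammingDist 0 y := hammingDist_triangle _ _ _
  _ = hammingNorm (x+y) + hammingNorm y := by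
      rw [hammingDist_zero_right, hammingDist_zero_left]

lemma mulVec_norm_le {k m : ℕ} (f1 : Matrix (Fin k) (Fin m) (ZMod 2))
    (hcol : ∀ j : Fin m, hammingNorm (fun i : Fin k => f1 i j) ≤ 1)
    (w : Fin m → ZMod 2) : hammingNorm (f1.mulVec w) ≤ hammingNorm w := by
  classical
  unfold hammingNorm
  have hsub : (univ.filter (fun i => f1.mulVec w i ≠ 0)) ⊆
      (univ.filter (fun j => w j ≠ 0)).biUnion
        (fun j => univ.filter (fun i => f1 i j ≠ 0)) := by
    intro i hi
    simp only [mem_filter, mem_univ, true_and] at hi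
    obtain ⟨j, _, hj⟩ := Finset.exists_ne_zero_of_sum_ne_zero (by
      simpa [Matrix.mulVec, dotProduct] using hi)
    simp only [mem_biUnion, mem_filter, mem_univ, true_and]
    exact ⟨j, fun h => hj (by simp [h]), fun h => hj (by simp [h])⟩
  calc (univ.filter (fun i => f1.mulVec w i ≠ 0)).card
      ≤ ((univ.filter (fun j => w j ≠ 0)).biUnion
          (fun j => univ.filter (fun i => f1 i j ≠ 0))).card := Finset.card_le_card hsub
    _ ≤ ∑ j ∈ univ.filter (fun j => w j ≠ 0), (univ.filter (fun i => f1 i j ≠ 0)).card :=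
        Finset.card_biUnion_le
    _ ≤ ∑ j ∈ univ.filter (fun j => w j ≠ 0), 1 := Finset.sum_le_sum (fun j _ => hcol j)
    _ = (univ.filter (fun j => w j ≠ 0)).card := by simp


/-- **X-distance of the merged (cone) code (Lemma: distance_merged_code, X part).**
Under the weight condition on `f₁` (rows and columns of weight ≤ 1) and the relative
Cheeger-constant condition `β(H_g, C_A) ≥ 1` for
`H_g = [[∂₁, 0],[f₁', H_X'ᵀ]]`, every X-logical `L_B` of the first CSS code keeps
weight at least `d_X` after adding any merged-code X-stabilizer
`H̃_Xᵀ (w_B; w_A; w_C) = (H_Xᵀ w_B + f₁ w_A ; ∂₁ w_A ; f₁' w_A + H_X'ᵀ w_C)`. -/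
theorem stmt_9 (n n' nA rA rX sZ rX' : ℕ)
    (HX : Matrix (Fin rX) (Fin n) (ZMod 2)) (HZ : Matrix (Fin sZ) (Fin n) (ZMod 2))
    (HX' : Matrix (Fin rX') (Fin n') (ZMod 2))
    (d1 : Matrix (Fin nA) (Fin rA) (ZMod 2))
    (f1 : Matrix (Fin n) (Fin rA) (ZMod 2))
    (f1' : Matrix (Fin n') (Fin rA) (ZMod 2))
    (hcss : HZ * HXᵀ = 0)
    (hrow : ∀ i : Fin n, hammingNorm (f1 i) ≤ 1)
    (hcol : ∀ j : Fin rA, hammingNorm (fun i : Fin n => f1 i j) ≤ 1)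
    (hcheeger : ∀ (wA : Fin rA → ZMod 2) (wC : Fin rX' → ZMod 2),
      hammingNorm wA ≤
        hammingNorm (d1.mulVec wA) + hammingNorm (f1'.mulVec wA + HX'ᵀ.mulVec wC)) :
    ∀ LB : Fin n → ZMod 2, HZ.mulVec LB = 0 →
      (¬ ∃ w : Fin rX → ZMod 2, HXᵀ.mulVec w = LB) →
      ∀ (wB : Fin rX → ZMod 2) (wA : Fin rA → ZMod 2) (wC : Fin rX' → ZMod 2),
        sInf {t | ∃ u : Fin n → ZMod 2, HZ.mulVec u = 0 ∧
            (¬ ∃ w : Fin rX → ZMod 2, HXᵀ.mulVec w = u) ∧ hammingNorm u = t}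
          ≤ hammingNorm (LB + HXᵀ.mulVec wB + f1.mulVec wA)
            + hammingNorm (d1.mulVec wA)
            + hammingNorm (f1'.mulVec wA + HX'ᵀ.mulVec wC) := by
  intro LB hLB hlog wB wA wC
  set L' := LB + HXᵀ.mulVec wB with hL'
  have hmem : sInf {t | ∃ u : Fin n → ZMod 2, HZ.mulVec u = 0 ∧
      (¬ ∃ w : Fin rX → ZMod 2, HXᵀ.mulVec w = u) ∧ hammingNorm u = t} ≤ hammingNorm L' := by
    apply Nat.sInf_le
    refine ⟨L', ?_, ?_, rfl⟩
    · rw [hL', Matrix.mulVec_add, hLB, Matrix.mulVec_mulVec, hcss]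
      simp
    · rintro ⟨w, hw⟩
      apply hlog
      refine ⟨w + wB, ?_⟩
      rw [Matrix.mulVec_add, hw, hL']
      funext i
      simp only [Pi.add_apply]
      have : HXᵀ.mulVec wB i + HXᵀ.mulVec wB i = 0 := CharTwo.add_self_eq_zero _
      linear_combination this
  have t1 : hammingNorm L' ≤ hammingNorm (L' + f1.mulVec wA) + hammingNorm (f1.mulVec wA) :=
    norm_le_add_norm _ _
  have t2 : hammingNorm (f1.mulVec wA) ≤ hammingNorm wA := mulVec_norm_le f1 hcol wA
  have t3 := hcheeger wA wC
  omega
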